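/- arXiv:1012.5751 — 2 statements merged into one kernel-verified Lean document; each statement's English description precedes it below -/
import Mathlib

section
/- Analogue of Darboux's theorem: if f: ℝ → ℝ is continuous and tendable in a neighborhood I of x₀ and x₀ is a strict local maximum (or minimum) of f which is not locally constant on either side, then the image of the tendency τ_f restricted to I contains all three values {−1, 0, +1}, and there are uncountably many points in I where τ_f = +1 and uncountably many where τ_f = −1. -/
open Filter Topology Set

/-- Right detachment: `lim_{h→0⁺} sgn (f (x+h) - f x) = L`. -/
def HasRightDet (f : ℝ → ℝ) (x L : ℝ) : Prop :=
  Filter.Tendsto (fun h : ℝ => Real.sign (f (x + h) - f x)) (𝓝[>] (0:ℝ)) (𝓝 L)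

/-- Left detachment: `lim_{h→0⁻} sgn (f (x+h) - f x) = L`. -/
def HasLeftDet (f : ℝ → ℝ) (x L : ℝ) : Prop :=
  Filter.Tendsto (fun h : ℝ => Real.sign (f (x + h) - f x)) (𝓝[<] (0:ℝ)) (𝓝 L)

/-- (Two-sided) detachment: `lim_{h→0} sgn (f (x+h) - f x) = L`. -/
def HasDet (f : ℝ → ℝ) (x L : ℝ) : Prop :=
  Filter.Tendsto (fun h : ℝ => Real.sign (f (x + h) - f x)) (𝓝[≠] (0:ℝ)) (𝓝 L)

/-- Signposted detachment: `lim_{h→0} sgn (h * (f (x+h) - f x)) = L`. -/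
def HasSignedDet (f : ℝ → ℝ) (x L : ℝ) : Prop :=
  Filter.Tendsto (fun h : ℝ => Real.sign (h * (f (x + h) - f x))) (𝓝[≠] (0:ℝ)) (𝓝 L)

/-- A point `x` has tendency `τ` if both one-sided detachments exist and
`sgn (Lp - Lm) = τ`. -/
def HasTendency (f : ℝ → ℝ) (x τ : ℝ) : Prop :=
  ∃ Lp Lm : ℝ, HasRightDet f x Lp ∧ HasLeftDet f x Lm ∧ Real.sign (Lp - Lm) = τ

lemma tendsto_neg_Ioi : Tendsto (fun h : ℝ => -h) (𝓝[>] (0:ℝ)) (𝓝[<] (0:ℝ)) := by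
  apply tendsto_nhdsWithin_of_tendsto_nhds_of_eventually_within
  · simpa using (continuous_neg.tendsto (0:ℝ)).mono_left nhdsWithin_le_nhds
  · filter_upwards [self_mem_nhdsWithin] with h hh
    simp only [Set.mem_Ioi] at hh
    simpa using hh

lemma tendsto_neg_Iio : Tendsto (fun h : ℝ => -h) (𝓝[<] (0:ℝ)) (𝓝[>] (0:ℝ)) := by
  apply tendsto_nhdsWithin_of_tendsto_nhds_of_eventually_within
  · simpa using (continuous_neg.tendsto (0:ℝ)).mono_left nhdsWithin_le_nhds
  · filter_upwards [self_mem_nhdsWithin] with h hh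
    simp only [Set.mem_Iio] at hh
    simpa using hh

lemma hasRightDet_neg {f : ℝ → ℝ} {x L : ℝ} (h : HasLeftDet f (-x) L) :
    HasRightDet (fun z => f (-z)) x L := by
  have h2 := h.comp tendsto_neg_Ioi
  apply h2.congr
  intro h'
  simp only [Function.comp_apply]
  rw [show -x + -h' = -(x + h') by ring]

lemma hasLeftDet_neg {f : ℝ → ℝ} {x L : ℝ} (h : HasRightDet f (-x) L) :
    HasLeftDet (fun z => f (-z)) x L := by
  have h2 := h.comp tendsto_neg_Iio
  apply h2.congr
  intro h'
  simp only [Function.comp_apply]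
  rw [show -x + -h' = -(x + h') by ring]

lemma hasRightDet_neg' {f : ℝ → ℝ} {x L : ℝ} (h : HasRightDet (fun z => f (-z)) x L) :
    HasLeftDet f (-x) L := by
  have h2 := hasLeftDet_neg (f := fun z => f (-z)) (x := -x) (L := L) (by simpa using h)
  simpa using h2

lemma hasLeftDet_neg' {f : ℝ → ℝ} {x L : ℝ} (h : HasLeftDet (fun z => f (-z)) x L) :
    HasRightDet f (-x) L := by
  have h2 := hasRightDet_neg (f := fun z => f (-z)) (x := -x) (L := L) (by simpa using h)
  simpa using h2

lemma pos_of_sign_eq_one {t : ℝ} (h : Real.sign t = 1) : 0 < t := by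
  rcases lt_trichotomy t 0 with h' | h' | h'
  · rw [Real.sign_of_neg h'] at h; norm_num at h
  · rw [h', Real.sign_zero] at h; norm_num at h
  · exact h'

lemma tendsto_sign_classify {g : ℝ → ℝ} {l : Filter ℝ} [l.NeBot] {L : ℝ}
    (h : Tendsto (fun x => Real.sign (g x)) l (𝓝 L)) :
    (L = -1 ∨ L = 0 ∨ L = 1) ∧ ∀ᶠ x in l, Real.sign (g x) = L := by
  have hmem : ∀ᶠ x in l, Real.sign (g x) ∈ ({-1, 0, 1} : Set ℝ) :=
    Eventually.of_forall fun x => by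
      rcases Real.sign_apply_eq (g x) with h' | h' | h' <;> simp [h']
  have hcl : IsClosed ({-1, 0, 1} : Set ℝ) := (Set.toFinite _).isClosed
  have hL : L ∈ ({-1, 0, 1} : Set ℝ) := hcl.mem_of_tendsto h hmem
  refine ⟨by simpa using hL, ?_⟩
  have hd : ∀ᶠ x in l, dist (Real.sign (g x)) L < 1/2 :=
    (Metric.tendsto_nhds.mp h) (1/2) (by norm_num)
  simp only [Set.mem_insert_iff, Set.mem_singleton_iff] at hL
  filter_upwards [hd, hmem] with x hx hmx
  rw [Real.dist_eq] at hx
  simp only [Set.mem_insert_iff, Set.mem_singleton_iff] at hmx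
  rcases hmx with h1 | h1 | h1 <;> rcases hL with h2 | h2 | h2 <;>
    rw [h1, h2] at hx ⊢ <;>
    first
      | rfl
      | (rw [abs_sub_lt_iff] at hx; norm_num at hx)


noncomputable def LMV (f : ℝ → ℝ) : Set ℝ :=
  {y : ℝ | ∃ x : ℝ, f x = y ∧ ∀ᶠ z in 𝓝 x, y ≤ f z}

lemma countable_LMV (f : ℝ → ℝ) : (LMV f).Countable := by
  have key : ∀ y ∈ LMV f, ∃ pq : ℚ × ℚ, ∃ x : ℝ, f x = y ∧ x ∈ Ioo (pq.1 : ℝ) (pq.2 : ℝ) ∧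
      ∀ z ∈ Ioo (pq.1 : ℝ) (pq.2 : ℝ), y ≤ f z := by
    rintro y ⟨x, hfx, hev⟩
    rcases Metric.eventually_nhds_iff.mp hev with ⟨ε, hε, hball⟩
    obtain ⟨p, hp1, hp2⟩ := exists_rat_btwn (show x - ε < x by linarith)
    obtain ⟨q, hq1, hq2⟩ := exists_rat_btwn (show x < x + ε by linarith)
    refine ⟨(p, q), x, hfx, ⟨hp2, hq1⟩, fun z hz => ?_⟩
    apply hball
    rw [Real.dist_eq, abs_sub_lt_iff]
    cases' hz with hz1 hz2
    constructor <;> linarith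
  classical
  choose! F x hfx hx hmin using key
  refine Set.MapsTo.countable_of_injOn (Set.mapsTo_univ F (LMV f)) ?_ (Set.countable_univ)
  intro y1 h1 y2 h2 he
  have e1 : y1 ≤ f (x y2) := by
    apply hmin y1 h1 (x y2)
    rw [he]
    exact hx y2 h2
  have e2 : y2 ≤ f (x y1) := by
    apply hmin y2 h2 (x y1)
    rw [← he]
    exact hx y1 h1
  rw [hfx y2 h2] at e1
  rw [hfx y1 h1] at e2
  exact le_antisymm e1 e2

lemma not_countable_Ioo {u v : ℝ} (h : u < v) : ¬ (Set.Countable (Ioo u v)) := by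
  intro hc
  have h2 : Cardinal.mk (Ioo u v) ≤ Cardinal.aleph0 := @Cardinal.mk_le_aleph0 _ hc.to_subtype
  rw [Cardinal.mk_Ioo_real h] at h2
  exact absurd h2 Cardinal.aleph0_lt_continuum.not_ge

lemma uncountable_plus (f : ℝ → ℝ) (a b x₀ tm : ℝ)
    (hx : x₀ ∈ Set.Ioo a b) (hcont : ContinuousOn f (Set.Ioo a b))
    (htend : ∀ x ∈ Set.Ioo a b, ∃ Lp Lm : ℝ, HasRightDet f x Lp ∧ HasLeftDet f x Lm)
    (htm : tm ∈ Set.Ioo a b) (h1 : tm < x₀) (h3 : f tm < f x₀) :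
    ¬ (Set.Countable {x ∈ Set.Ioo a b | HasTendency f x 1}) := by
  intro hc
  have hsub : Icc tm x₀ ⊆ Ioo a b := Icc_subset_Ioo htm.1 hx.2
  have exN : ∀ y ∈ Ioo (f tm) (f x₀),
      y ∈ LMV f ∨ ∃ x, x ∈ {x ∈ Set.Ioo a b | HasTendency f x 1} ∧ f x = y := by
    intro y hy
    set K : Set ℝ := Icc tm x₀ ∩ f ⁻¹' {y} with hKdef
    have hKcl : IsClosed K :=
      (hcont.mono hsub).preimage_isClosed_of_isClosed isClosed_Icc isClosed_singleton
    have hKcpt : IsCompact K := isCompact_Icc.of_isClosed_subset hKcl inter_subset_left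
    have hKne : K.Nonempty := by
      have hmem : y ∈ f '' Icc tm x₀ :=
        intermediate_value_Icc h1.le (hcont.mono hsub) ⟨hy.1.le, hy.2.le⟩
      obtain ⟨w, hw, hfw⟩ := hmem
      exact ⟨w, hw, by simpa using hfw⟩
    set c : ℝ := sSup K with hcdef
    have hcK : c ∈ K := hKcpt.sSup_mem hKne
    have hfc : f c = y := by simpa using hcK.2
    have hcIcc : c ∈ Icc tm x₀ := hcK.1
    have hclt : c < x₀ := by
      rcases lt_or_eq_of_le hcIcc.2 with h | h
      · exact h
      · exfalso; rw [h] at hfc; exact absurd hfc.symm hy.2.ne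
    have hgt : ∀ z ∈ Ioc c x₀, y < f z := by
      intro z hz
      by_contra hle
      push_neg at hle
      rcases eq_or_lt_of_le hle with heq | hlt
      · have hzK : z ∈ K := ⟨⟨le_trans hcIcc.1 hz.1.le, hz.2⟩, by simpa using heq⟩
        exact absurd (le_csSup hKcpt.bddAbove hzK) (not_le.mpr hz.1)
      · have hzsub : Icc z x₀ ⊆ Icc tm x₀ :=
          Icc_subset_Icc (le_trans hcIcc.1 hz.1.le) le_rfl
        have hmem : y ∈ f '' Icc z x₀ :=
          intermediate_value_Icc hz.2 ((hcont.mono hsub).mono hzsub) ⟨hlt.le, hy.2.le⟩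
        obtain ⟨w, hwmem, hfw⟩ := hmem
        have hwK : w ∈ K :=
          ⟨⟨le_trans hcIcc.1 (le_trans hz.1.le hwmem.1), hwmem.2⟩, by simpa using hfw⟩
        have hwle : w ≤ c := le_csSup hKcpt.bddAbove hwK
        have : z ≤ w := hwmem.1
        linarith [hz.1]
    have hRight : HasRightDet f c 1 := by
      apply tendsto_const_nhds.congr'
      have hIoo : Ioo (0:ℝ) (x₀ - c) ∈ 𝓝[>] (0:ℝ) :=
        Ioo_mem_nhdsGT_of_mem ⟨le_rfl, sub_pos.mpr hclt⟩
      filter_upwards [hIoo] with h' hh'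
      have hmem : c + h' ∈ Ioc c x₀ := ⟨by linarith [hh'.1], by linarith [hh'.2]⟩
      have : 0 < f (c + h') - f c := by
        rw [hfc]; exact sub_pos.mpr (hgt _ hmem)
      exact (Real.sign_of_pos this).symm
    obtain ⟨Lp, Lm, hLp, hLm⟩ := htend c (hsub hcIcc)
    have hLp1 : Lp = 1 := tendsto_nhds_unique hLp hRight
    obtain ⟨hLmc, hLmev⟩ := tendsto_sign_classify hLm
    have htend1 : Lm = -1 ∨ Lm = 0 → y ∈ LMV f ∨
        ∃ x, x ∈ {x ∈ Set.Ioo a b | HasTendency f x 1} ∧ f x = y := by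
      intro hcase
      refine Or.inr ⟨c, ⟨hsub hcIcc, Lp, Lm, hLp, hLm, ?_⟩, hfc⟩
      rw [hLp1]
      rcases hcase with h | h <;> rw [h] <;>
        exact Real.sign_of_pos (by norm_num)
    rcases hLmc with hm | hm | hm
    · exact htend1 (Or.inl hm)
    · exact htend1 (Or.inr hm)
    · -- Lm = 1 : y is a local min value
      left
      rw [hm] at hLmev
      obtain ⟨l', hl', hsubl⟩ := mem_nhdsLT_iff_exists_Ioo_subset.mp hLmev
      refine ⟨c, hfc, ?_⟩
      have hnbd : Ioo (c + l') x₀ ∈ 𝓝 c := Ioo_mem_nhds (by simpa using hl') hclt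
      filter_upwards [hnbd] with z hz
      rcases lt_trichotomy z c with hzc | hzc | hzc
      · have hhm : z - c ∈ Ioo l' 0 := ⟨by linarith [hz.1], by linarith⟩
        have := hsubl hhm
        simp only [Set.mem_setOf_eq] at this
        have hpos : 0 < f (c + (z - c)) - f c := pos_of_sign_eq_one this
        rw [show c + (z - c) = z by ring, hfc] at hpos
        linarith
      · rw [hzc, hfc]
      · exact (hgt z ⟨hzc, hz.2.le⟩).le
  -- now the counting argument
  have hD : ∀ y : ℝ, ∃ x : ℝ, y ∈ Ioo (f tm) (f x₀) \ LMV f →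
      x ∈ {x ∈ Set.Ioo a b | HasTendency f x 1} ∧ f x = y := by
    intro y
    by_cases hy : y ∈ Ioo (f tm) (f x₀) \ LMV f
    · obtain ⟨x, hx1, hx2⟩ := (exN y hy.1).resolve_left hy.2
      exact ⟨x, fun _ => ⟨hx1, hx2⟩⟩
    · exact ⟨0, fun h => absurd h hy⟩
  choose g hg using hD
  have hDc : (Ioo (f tm) (f x₀) \ LMV f).Countable := by
    refine Set.MapsTo.countable_of_injOn (fun y hy => (hg y hy).1) ?_ hc
    intro y1 hy1 y2 hy2 he
    rw [← (hg y1 hy1).2, ← (hg y2 hy2).2, he]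
  have hIc : (Ioo (f tm) (f x₀)).Countable := by
    refine Set.Countable.mono ?_ (hDc.union (countable_LMV f))
    intro y hy
    by_cases h : y ∈ LMV f
    · exact Or.inr h
    · exact Or.inl ⟨hy, h⟩
  exact not_countable_Ioo h3 hIc

lemma uncountable_minus (f : ℝ → ℝ) (a b x₀ tp : ℝ)
    (hx : x₀ ∈ Set.Ioo a b) (hcont : ContinuousOn f (Set.Ioo a b))
    (htend : ∀ x ∈ Set.Ioo a b, ∃ Lp Lm : ℝ, HasRightDet f x Lp ∧ HasLeftDet f x Lm)
    (htp : tp ∈ Set.Ioo a b) (h2 : x₀ < tp) (h4 : f tp < f x₀) :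
    ¬ (Set.Countable {x ∈ Set.Ioo a b | HasTendency f x (-1)}) := by
  intro hc
  set g : ℝ → ℝ := fun z => f (-z) with hgdef
  have hgc : ContinuousOn g (Set.Ioo (-b) (-a)) := by
    apply hcont.comp continuousOn_neg
    intro z hz
    exact ⟨by linarith [hz.2], by linarith [hz.1]⟩
  have hgtend : ∀ x ∈ Set.Ioo (-b) (-a), ∃ Lp Lm : ℝ, HasRightDet g x Lp ∧ HasLeftDet g x Lm := by
    intro x hxm
    obtain ⟨Lp, Lm, hLp, hLm⟩ := htend (-x) ⟨by linarith [hxm.2], by linarith [hxm.1]⟩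
    exact ⟨Lm, Lp, hasRightDet_neg hLm, hasLeftDet_neg hLp⟩
  have hmain := uncountable_plus g (-b) (-a) (-x₀) (-tp)
    ⟨by linarith [hx.2], by linarith [hx.1]⟩ hgc hgtend
    ⟨by linarith [htp.2], by linarith [htp.1]⟩ (by linarith)
    (by simp only [hgdef, neg_neg]; exact h4)
  apply hmain
  have hpre : (Neg.neg ⁻¹' {x ∈ Set.Ioo a b | HasTendency f x (-1)}).Countable :=
    hc.preimage neg_injective
  refine Set.Countable.mono ?_ hpre
  rintro x ⟨hxm, Lp, Lm, hLp, hLm, hs⟩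
  refine ⟨⟨by linarith [hxm.2], by linarith [hxm.1]⟩, Lm, Lp, ?_, ?_, ?_⟩
  · exact hasLeftDet_neg' hLm
  · exact hasRightDet_neg' hLp
  · rw [show Lm - Lp = -(Lp - Lm) by ring, Real.sign_neg, hs]

lemma tendency_zero_of_constant {f : ℝ → ℝ} {c δ : ℝ} (hδ : 0 < δ)
    (hconst : ∀ z, |z - c| < δ → f z = f c) : HasTendency f c 0 := by
  have hev : ∀ᶠ h' in 𝓝 (0:ℝ), Real.sign (f (c + h') - f c) = 0 := by
    filter_upwards [Metric.ball_mem_nhds (0:ℝ) hδ] with h' hh'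
    rw [Metric.mem_ball, Real.dist_eq, sub_zero] at hh'
    rw [hconst (c + h') (by simpa using hh'), sub_self, Real.sign_zero]
  refine ⟨0, 0, ?_, ?_, by rw [sub_self, Real.sign_zero]⟩
  · exact tendsto_const_nhds.congr'
      (by filter_upwards [hev.filter_mono nhdsWithin_le_nhds] with h hh; exact hh.symm)
  · exact tendsto_const_nhds.congr'
      (by filter_upwards [hev.filter_mono nhdsWithin_le_nhds] with h hh; exact hh.symm)

lemma exists_zero (f : ℝ → ℝ) (a b x₀ tm tp : ℝ)
    (hx : x₀ ∈ Set.Ioo a b) (hcont : ContinuousOn f (Set.Ioo a b))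
    (htend : ∀ x ∈ Set.Ioo a b, ∃ Lp Lm : ℝ, HasRightDet f x Lp ∧ HasLeftDet f x Lm)
    (htm : tm ∈ Set.Ioo a b) (htp : tp ∈ Set.Ioo a b)
    (h1 : tm < x₀) (h2 : x₀ < tp) (h3 : f tm < f x₀) (h4 : f tp < f x₀) :
    ∃ x ∈ Set.Ioo a b, HasTendency f x 0 := by
  have hsub : Icc tm tp ⊆ Ioo a b := Icc_subset_Ioo htm.1 htp.2
  obtain ⟨c, hcmem, hcmax⟩ := isCompact_Icc.exists_isMaxOn
    (nonempty_Icc.mpr (by linarith)) (hcont.mono hsub)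
  have hfc : f x₀ ≤ f c := hcmax ⟨h1.le, h2.le⟩
  have hcab : c ∈ Ioo a b := hsub hcmem
  have hctm : tm < c := by
    rcases lt_or_eq_of_le hcmem.1 with h | h
    · exact h
    · exfalso; rw [← h] at hfc; linarith
  have hctp : c < tp := by
    rcases lt_or_eq_of_le hcmem.2 with h | h
    · exact h
    · exfalso; rw [h] at hfc; linarith
  obtain ⟨Lp, Lm, hLp, hLm⟩ := htend c hcab
  obtain ⟨hLpc, hLpev⟩ := tendsto_sign_classify hLp
  obtain ⟨hLmc, hLmev⟩ := tendsto_sign_classify hLm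
  have hLpne : Lp ≠ 1 := by
    intro h
    rw [h] at hLpev
    have hIoo : Ioo (0:ℝ) (tp - c) ∈ 𝓝[>] (0:ℝ) :=
      Ioo_mem_nhdsGT_of_mem ⟨le_rfl, sub_pos.mpr hctp⟩
    obtain ⟨h', hh1, hh2⟩ := (hLpev.and (eventually_of_mem hIoo (fun _ h => h))).exists
    have hle : f (c + h') ≤ f c := hcmax ⟨by linarith [hctm, hh2.1], by linarith [hh2.2]⟩
    have := pos_of_sign_eq_one hh1
    linarith
  have hLmne : Lm ≠ 1 := by
    intro h
    rw [h] at hLmev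
    have hIoo : Ioo (tm - c) (0:ℝ) ∈ 𝓝[<] (0:ℝ) :=
      Ioo_mem_nhdsLT_of_mem ⟨by linarith, le_rfl⟩
    obtain ⟨h', hh1, hh2⟩ := (hLmev.and (eventually_of_mem hIoo (fun _ h => h))).exists
    have hle : f (c + h') ≤ f c := hcmax ⟨by linarith [hh2.1], by linarith [hh2.2]⟩
    have := pos_of_sign_eq_one hh1
    linarith
  by_cases hp0 : Lp = 0
  · -- f is constant just to the right of c
    rw [hp0] at hLpev
    obtain ⟨u, hu, hsubu⟩ := mem_nhdsGT_iff_exists_Ioo_subset.mp hLpev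
    rw [Set.mem_Ioi] at hu
    set δ : ℝ := min u (b - c) with hδdef
    have hδpos : 0 < δ := lt_min hu (by linarith [hcab.2])
    have hδu : δ ≤ u := min_le_left _ _
    have hδb : δ ≤ b - c := min_le_right _ _
    refine ⟨c + δ/2, ⟨by linarith [hcab.1], by linarith⟩, ?_⟩
    have hconst : ∀ z, |z - (c + δ/2)| < δ/8 → f z = f (c + δ/2) := by
      have haux : ∀ z, |z - (c + δ/2)| < δ/8 → f z = f c := by
        intro z hz
        rw [abs_sub_lt_iff] at hz
        have hzc : z - c ∈ Ioo (0:ℝ) u := ⟨by linarith [hz.1, hz.2], by linarith [hz.1, hz.2]⟩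
        have := hsubu hzc
        simp only [Set.mem_setOf_eq, Real.sign_eq_zero_iff, sub_eq_zero] at this
        rw [show c + (z - c) = z by ring] at this
        exact this
      intro z hz
      rw [haux z hz, haux (c + δ/2) (by rw [sub_self, abs_zero]; linarith)]
    exact tendency_zero_of_constant (by linarith) hconst
  · have hLp1 : Lp = -1 := by
      rcases hLpc with h | h | h
      · exact h
      · exact absurd h hp0
      · exact absurd h hLpne
    by_cases hm0 : Lm = 0
    · -- f is constant just to the left of c
      rw [hm0] at hLmev
      obtain ⟨l', hl', hsubl⟩ := mem_nhdsLT_iff_exists_Ioo_subset.mp hLmev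
      rw [Set.mem_Iio] at hl'
      set δ : ℝ := min (-l') (c - a) with hδdef
      have hδpos : 0 < δ := lt_min (by linarith) (by linarith [hcab.1])
      have hδu : δ ≤ -l' := min_le_left _ _
      have hδa : δ ≤ c - a := min_le_right _ _
      refine ⟨c - δ/2, ⟨by linarith, by linarith [hcab.2]⟩, ?_⟩
      have hconst : ∀ z, |z - (c - δ/2)| < δ/8 → f z = f (c - δ/2) := by
        have haux : ∀ z, |z - (c - δ/2)| < δ/8 → f z = f c := by
          intro z hz
          rw [abs_sub_lt_iff] at hz
          have hzc : z - c ∈ Ioo l' (0:ℝ) := ⟨by linarith [hz.1, hz.2], by linarith [hz.1, hz.2]⟩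
          have := hsubl hzc
          simp only [Set.mem_setOf_eq, Real.sign_eq_zero_iff, sub_eq_zero] at this
          rw [show c + (z - c) = z by ring] at this
          exact this
        intro z hz
        rw [haux z hz, haux (c - δ/2) (by rw [sub_self, abs_zero]; linarith)]
      exact tendency_zero_of_constant (by linarith) hconst
    · have hLm1 : Lm = -1 := by
        rcases hLmc with h | h | h
        · exact h
        · exact absurd h hm0
        · exact absurd h hLmne
      refine ⟨c, hcab, Lp, Lm, hLp, hLm, ?_⟩
      rw [hLp1, hLm1, sub_self, Real.sign_zero]

/-- Analogue of Darboux's theorem: if `f` is continuous and tendable on an open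
interval `I = (a,b)` containing `x₀`, `x₀` is a local maximum of `f`, and `f` takes
strictly smaller values at some points on both sides, then the tendency attains all
three values `-1, 0, +1` on `I`, and the sets where the tendency is `+1`
(respectively `-1`) are uncountable. -/
theorem darboux_tendency (f : ℝ → ℝ) (a b x₀ tm tp : ℝ)
    (hx : x₀ ∈ Set.Ioo a b)
    (hcont : ContinuousOn f (Set.Ioo a b))
    (htend : ∀ x ∈ Set.Ioo a b, ∃ Lp Lm : ℝ, HasRightDet f x Lp ∧ HasLeftDet f x Lm)
    (hmax : ∀ᶠ x in 𝓝 x₀, f x ≤ f x₀)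
    (htm : tm ∈ Set.Ioo a b) (htp : tp ∈ Set.Ioo a b)
    (h1 : tm < x₀) (h2 : x₀ < tp) (h3 : f tm < f x₀) (h4 : f tp < f x₀) :
    (∀ τ ∈ ({-1, 0, 1} : Set ℝ), ∃ x ∈ Set.Ioo a b, HasTendency f x τ) ∧
      ¬ (Set.Countable {x ∈ Set.Ioo a b | HasTendency f x 1}) ∧
      ¬ (Set.Countable {x ∈ Set.Ioo a b | HasTendency f x (-1)}) := by
  have hplus := uncountable_plus f a b x₀ tm hx hcont htend htm h1 h3
  have hminus := uncountable_minus f a b x₀ tp hx hcont htend htp h2 h4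
  refine ⟨?_, hplus, hminus⟩
  intro τ hτ
  simp only [Set.mem_insert_iff, Set.mem_singleton_iff] at hτ
  rcases hτ with rfl | rfl | rfl
  · have hne : {x ∈ Set.Ioo a b | HasTendency f x (-1)}.Nonempty := by
      rw [Set.nonempty_iff_ne_empty]
      intro h
      exact hminus (h ▸ Set.countable_empty)
    obtain ⟨x, hx1, hx2⟩ := hne
    exact ⟨x, hx1, hx2⟩
  · exact exists_zero f a b x₀ tm tp hx hcont htend htm htp h1 h2 h3 h4
  · have hne : {x ∈ Set.Ioo a b | HasTendency f x 1}.Nonempty := by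
      rw [Set.nonempty_iff_ne_empty]
      intro h
      exact hplus (h ▸ Set.countable_empty)
    obtain ⟨x, hx1, hx2⟩ := hne
    exact ⟨x, hx1, hx2⟩
end

section
/- Semi-discrete fundamental theorem: let f: [a,b] → ℝ be continuous and tendable on [a,b], and let a = x₁ < x₂ < ... < x_n = b be a division such that the tendency τ_f is constant on each open subinterval (x_i, x_{i+1}). Extend τ_f to [a,b] by τ_f(a) = f^;_+(a) and τ_f(b) = −f^;_−(b). Then ∫_a^b τ_f(x) dx = −[ Σ_{i=1}^{n−1} f^;_+(x_i)·x_i + Σ_{i=2}^{n} f^;_−(x_i)·x_i ]. -/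
open Filter Topology Set

lemma neg_one_le_sign (r : ℝ) : -1 ≤ Real.sign r := by
  rcases Real.sign_apply_eq r with h | h | h <;> rw [h] <;> norm_num

lemma sign_nonpos_of_nonpos {r : ℝ} (h : r ≤ 0) : Real.sign r ≤ 0 := by
  rcases eq_or_lt_of_le h with h' | h'
  · rw [h', Real.sign_zero]
  · rw [Real.sign_of_neg h']; norm_num

lemma pos_of_sign_gt {r : ℝ} (h : (1:ℝ)/2 < Real.sign r) : 0 < r := by
  by_contra h'
  exact absurd (sign_nonpos_of_nonpos (not_lt.mp h')) (by linarith)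

lemma real_sign_neg (r : ℝ) : Real.sign (-r) = - Real.sign r := by
  rcases lt_trichotomy r 0 with h | h | h
  · rw [Real.sign_of_neg h, Real.sign_of_pos (by linarith)]; norm_num
  · simp [h]
  · rw [Real.sign_of_pos h, Real.sign_of_neg (by linarith)]

/-- determine a right detachment by eventual constancy on a small interval -/
lemma rightDet_eq (f : ℝ → ℝ) {x L : ℝ} (h : HasRightDet f x L) {δ s : ℝ} (hδ : 0 < δ)
    (hv : ∀ h' ∈ Ioo (0:ℝ) δ, Real.sign (f (x + h') - f x) = s) : L = s := by
  refine tendsto_nhds_unique h ?_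
  refine Tendsto.congr' ?_ tendsto_const_nhds
  filter_upwards [Ioo_mem_nhdsGT hδ] with h' hh'
  exact (hv h' hh').symm

lemma leftDet_eq (f : ℝ → ℝ) {x L : ℝ} (h : HasLeftDet f x L) {δ s : ℝ} (hδ : δ < 0)
    (hv : ∀ h' ∈ Ioo δ (0:ℝ), Real.sign (f (x + h') - f x) = s) : L = s := by
  refine tendsto_nhds_unique h ?_
  refine Tendsto.congr' ?_ tendsto_const_nhds
  filter_upwards [Ioo_mem_nhdsLT hδ] with h' hh'
  exact (hv h' hh').symm

/-- if the left detachment is 1, f is bigger just to the left -/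
lemma leftDet_pos (f : ℝ → ℝ) {x : ℝ} (h : HasLeftDet f x 1) :
    ∃ δ > 0, ∀ h' ∈ Ioo (-δ) (0:ℝ), f x < f (x + h') := by
  have h2 : {r : ℝ | (1:ℝ)/2 < r} ∈ 𝓝 (1:ℝ) := by
    apply Ioi_mem_nhds; norm_num
  have := h h2
  rw [mem_map, mem_nhdsLT_iff_exists_Ioo_subset] at this
  obtain ⟨l, hl, hsub⟩ := this
  refine ⟨-l, by simpa using hl, fun h' hh' => ?_⟩
  have : h' ∈ Ioo l 0 := by constructor <;> [linarith [hh'.1]; exact hh'.2]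
  have := hsub this
  have := pos_of_sign_gt this
  linarith

lemma rightDet_neg (f : ℝ → ℝ) {x : ℝ} (h : HasRightDet f x (-1)) :
    ∃ δ > 0, ∀ h' ∈ Ioo (0:ℝ) δ, f (x + h') < f x := by
  have h2 : {r : ℝ | r < -(1:ℝ)/2} ∈ 𝓝 (-1:ℝ) := by
    apply Iio_mem_nhds; norm_num
  have := h h2
  rw [mem_map, mem_nhdsGT_iff_exists_Ioo_subset] at this
  obtain ⟨u, hu, hsub⟩ := this
  refine ⟨u, by simpa using hu, fun h' hh' => ?_⟩
  have h3 := hsub hh'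
  simp only [mem_preimage, mem_setOf_eq] at h3
  have : (1:ℝ)/2 < Real.sign (-(f (x + h') - f x)) := by
    rw [real_sign_neg]; linarith
  have := pos_of_sign_gt this
  linarith

lemma leftDet_eq_neg_one_of_frequently (f : ℝ → ℝ) {x L : ℝ} (h : HasLeftDet f x L)
    (hf : ∃ᶠ h' in 𝓝[<] (0:ℝ), Real.sign (f (x + h') - f x) = -1) : L = -1 := by
  have : L ∈ closure {(-1:ℝ)} := by
    apply mem_closure_of_frequently_of_tendsto _ h
    exact hf.mono (fun h' hh' => hh')
  simpa using this

lemma hasRightDet_neg_s15 {f dp : ℝ → ℝ} {t : ℝ} (h : HasRightDet f t (dp t)) :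
    HasRightDet (fun y => -f y) t (-(dp t)) := by
  have := h.neg
  refine this.congr (fun h' => ?_)
  simp only [← real_sign_neg]
  ring_nf

lemma hasLeftDet_neg_s15 {f dp : ℝ → ℝ} {t : ℝ} (h : HasLeftDet f t (dp t)) :
    HasLeftDet (fun y => -f y) t (-(dp t)) := by
  have := h.neg
  refine this.congr (fun h' => ?_)
  simp only [← real_sign_neg]
  ring_nf
section
variable (f dp dm : ℝ → ℝ) (p q : ℝ)

lemma zero_not_lt
    (hcont : ContinuousOn f (Icc p q))
    (hdp : ∀ t ∈ Ioo p q, HasRightDet f t (dp t))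
    (hdm : ∀ t ∈ Ioo p q, HasLeftDet f t (dm t))
    (h0 : ∀ t ∈ Ioo p q, dp t = dm t)
    (s t : ℝ) (hps : p ≤ s) (hst : s < t) (htq : t ≤ q) : ¬ f s < f t := by
  intro hlt
  set c : ℝ := (f s + f t) / 2 with hc
  have hc1 : f s < c := by rw [hc]; linarith
  have hc2 : c < f t := by rw [hc]; linarith
  have hIcc : Icc s t ⊆ Icc p q := Icc_subset_Icc hps htq
  have hconst : ContinuousOn f (Icc s t) := hcont.mono hIcc
  set S : Set ℝ := {v ∈ Icc s t | f v = c} with hS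
  have hSclosed : IsClosed S := by
    have : S = Icc s t ∩ f ⁻¹' {c} := by ext v; simp [hS]
    rw [this]
    exact hconst.preimage_isClosed_of_isClosed isClosed_Icc isClosed_singleton
  have hScomp : IsCompact S := isCompact_Icc.of_isClosed_subset hSclosed (sep_subset _ _)
  have hSne : S.Nonempty := by
    have := intermediate_value_Icc hst.le hconst
    obtain ⟨v, hv, hfv⟩ := this ⟨hc1.le, hc2.le⟩
    exact ⟨v, hv, hfv⟩
  -- u = sup S
  set u : ℝ := sSup S with hu
  have huS : u ∈ S := hScomp.sSup_mem hSne
  have hub : ∀ v ∈ S, v ≤ u := fun v hv => le_csSup hScomp.bddAbove hv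
  have hfu : f u = c := huS.2
  have hsu : s < u := lt_of_le_of_ne huS.1.1 (fun h => by rw [← h] at hfu; linarith)
  have hut : u < t := lt_of_le_of_ne huS.1.2 (fun h => by rw [h] at hfu; linarith)
  have hu_in : u ∈ Ioo p q := ⟨lt_of_le_of_lt hps hsu, lt_of_lt_of_le hut htq⟩
  -- f > c strictly right of u
  have hgt : ∀ v ∈ Ioc u t, c < f v := by
    intro v hv
    rcases lt_trichotomy (f v) c with h | h | h
    · obtain ⟨w, hw, hfw⟩ := intermediate_value_Icc hv.2 (hconst.mono
        (Icc_subset_Icc (hsu.le.trans hv.1.le) le_rfl)) ⟨h.le, hc2.le⟩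
      have hwS : w ∈ S := ⟨⟨(hsu.le.trans hv.1.le).trans hw.1, hw.2⟩, hfw⟩
      have := hub w hwS
      have : u < w := lt_of_lt_of_le hv.1 hw.1
      linarith [hub w hwS]
    · exact absurd (hub v ⟨⟨hsu.le.trans hv.1.le, hv.2⟩, h⟩) (not_le.mpr hv.1)
    · exact h
  have hdpu : dp u = 1 := by
    refine rightDet_eq f (hdp u hu_in) (sub_pos.mpr hut) (fun h' hh' => ?_)
    have : c < f (u + h') := hgt (u + h') ⟨by linarith [hh'.1], by linarith [hh'.2]⟩
    rw [hfu, Real.sign_of_pos]; linarith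
  have hdmu : dm u = 1 := by rw [← h0 u hu_in, hdpu]
  obtain ⟨δ₁, hδ₁, hδ₁p⟩ := leftDet_pos f (hdmu ▸ hdm u hu_in)
  -- w = inf S
  set w : ℝ := sInf S with hw
  have hwS : w ∈ S := hScomp.sInf_mem hSne
  have hlb : ∀ v ∈ S, w ≤ v := fun v hv => csInf_le hScomp.bddBelow hv
  have hfw : f w = c := hwS.2
  have hsw : s < w := lt_of_le_of_ne hwS.1.1 (fun h => by rw [← h] at hfw; linarith)
  have hwu : w ≤ u := hub w hwS
  have hwt : w < t := lt_of_le_of_lt hwu hut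
  have hw_in : w ∈ Ioo p q := ⟨lt_of_le_of_lt hps hsw, lt_of_lt_of_le hwt htq⟩
  have hltw : ∀ v ∈ Ico s w, f v < c := by
    intro v hv
    rcases lt_trichotomy (f v) c with h | h | h
    · exact h
    · exact absurd (hlb v ⟨⟨hv.1, hv.2.le.trans hwt.le⟩, h⟩) (not_le.mpr hv.2)
    · obtain ⟨w', hw', hfw'⟩ := intermediate_value_Icc hv.1 (hconst.mono
        (Icc_subset_Icc le_rfl (hv.2.le.trans hwt.le))) ⟨hc1.le, h.le⟩
      have : w ≤ w' := hlb w' ⟨⟨hw'.1, hw'.2.trans (hv.2.le.trans hwt.le)⟩, hfw'⟩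
      linarith [hw'.2, hv.2]
  have hdmw : dm w = -1 := by
    refine leftDet_eq f (hdm w hw_in) (sub_neg.mpr hsw) (fun h' hh' => ?_)
    have : f (w + h') < c := hltw (w + h') ⟨by linarith [hh'.1], by linarith [hh'.2]⟩
    rw [hfw, Real.sign_of_neg]; linarith
  have hdpw : dp w = -1 := by rw [h0 w hw_in, hdmw]
  obtain ⟨δ₂, hδ₂, hδ₂p⟩ := rightDet_neg f (hdpw ▸ hdp w hw_in)
  -- w < u
  have hwu' : w < u := by
    rcases lt_or_eq_of_le hwu with h | h
    · exact h
    · exfalso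
      set h' := min δ₂ (t - u) / 2 with hh'
      have hm : (0:ℝ) < min δ₂ (t - u) := lt_min hδ₂ (by linarith)
      have hh'pos : 0 < h' := by rw [hh']; linarith
      have h1 : f (w + h') < f w := hδ₂p h' ⟨hh'pos, by
        rw [hh']; have := min_le_left δ₂ (t - u); linarith⟩
      have h2 : c < f (w + h') := by
        rw [h] at h1 ⊢
        refine hgt (u + h') ⟨by linarith, by
          rw [hh']; have := min_le_right δ₂ (t - u); linarith⟩
      rw [hfw] at h1; linarith
  -- T and z = sup T
  set T : Set ℝ := {v ∈ Icc w u | f v < c} with hT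
  have hTbdd : BddAbove T := ⟨u, fun v hv => hv.1.2⟩
  have hv0m : (0:ℝ) < min δ₂ (u - w) := lt_min hδ₂ (by linarith)
  set v₀ : ℝ := w + min δ₂ (u - w) / 2 with hv₀
  have hv₀T : v₀ ∈ T := by
    constructor
    · constructor
      · rw [hv₀]; linarith
      · rw [hv₀]; have := min_le_right δ₂ (u - w); linarith
    · have := hδ₂p (min δ₂ (u - w) / 2) ⟨by linarith, by
        have := min_le_left δ₂ (u - w); linarith⟩
      rw [hfw] at this
      exact this
  have hTne : T.Nonempty := ⟨v₀, hv₀T⟩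
  set z : ℝ := sSup T with hz
  have hzv₀ : v₀ ≤ z := le_csSup hTbdd hv₀T
  have hwz : w < z := lt_of_lt_of_le (by rw [hv₀]; linarith) hzv₀
  -- every element of T is ≤ max w (u - δ₁)
  have hTub : ∀ v ∈ T, v ≤ max w (u - δ₁) := by
    intro v hv
    by_contra hb
    push_neg at hb
    have hv1 : w < v := lt_of_le_of_lt (le_max_left _ _) hb
    have hv2 : u - δ₁ < v := lt_of_le_of_lt (le_max_right _ _) hb
    have hvu : v ≤ u := hv.1.2
    rcases lt_or_eq_of_le hvu with h | h
    · have : f u < f (u + (v - u)) := hδ₁p (v - u) ⟨by linarith, by linarith⟩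
      simp only [add_sub_cancel] at this
      rw [hfu] at this
      linarith [hv.2]
    · have h2 := hv.2
      rw [h, hfu] at h2
      linarith
  have hzB : z ≤ max w (u - δ₁) := csSup_le hTne hTub
  have hzu : z < u := lt_of_le_of_lt hzB (max_lt hwu' (by linarith))
  have hz_in : z ∈ Ioo p q := ⟨by linarith [hw_in.1], by linarith [hu_in.2]⟩
  have hzIcc : z ∈ Icc p q := ⟨hz_in.1.le, hz_in.2.le⟩
  -- f z = c
  have hfzc : f z = c := by
    rcases lt_trichotomy (f z) c with h | h | h
    · exfalso
      have hcw : ContinuousWithinAt f (Icc p q) z := hcont z hzIcc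
      have hev : ∀ᶠ v in 𝓝[Icc p q] z, f v < c :=
        Filter.Tendsto.eventually_lt hcw tendsto_const_nhds h
      have hle : 𝓝[Ioo z u] z ≤ 𝓝[Icc p q] z := nhdsWithin_mono z (fun v hv =>
        ⟨by linarith [hz_in.1, hv.1], by linarith [hu_in.2, hv.2]⟩)
      have : ∀ᶠ v in 𝓝[Ioo z u] z, f v < c := hle hev
      have hne : (𝓝[Ioo z u] z).NeBot := by
        rw [← mem_closure_iff_nhdsWithin_neBot, closure_Ioo (ne_of_lt hzu)]
        exact ⟨le_rfl, hzu.le⟩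
      obtain ⟨v, hfv, hv⟩ := (this.and (eventually_mem_nhdsWithin)).exists
      have : v ∈ T := ⟨⟨by linarith [hv.1], hv.2.le⟩, hfv⟩
      linarith [le_csSup hTbdd this, hv.1]
    · exact h
    · exfalso
      have hcw : ContinuousWithinAt f (Icc p q) z := hcont z hzIcc
      have hev : {v | c < f v} ∈ 𝓝[Icc p q] z :=
        Filter.Tendsto.eventually_lt tendsto_const_nhds hcw h
      rw [mem_nhdsWithin] at hev
      obtain ⟨O, hO, hzO, hsub⟩ := hev
      obtain ⟨ε, hε, hball⟩ := Metric.mem_nhds_iff.mp (hO.mem_nhds hzO)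
      obtain ⟨v, hvT, hvz⟩ := exists_lt_of_lt_csSup hTne (show z - ε < sSup T by
        rw [← hz]; linarith)
      have hvle : v ≤ z := le_csSup hTbdd hvT
      have hvO : v ∈ O := hball (by
        rw [Metric.mem_ball, Real.dist_eq, abs_lt]; constructor <;> linarith)
      have hvIcc : v ∈ Icc p q := ⟨by linarith [hw_in.1, hvT.1.1], by linarith [hu_in.2, hvT.1.2]⟩
      have := hsub ⟨hvO, hvIcc⟩
      exact absurd hvT.2 (not_lt.mpr this.le)
  -- z ∉ T, so all elements of T are < z
  have hzT : z ∉ T := fun h => by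
    have := h.2; rw [hfzc] at this; exact lt_irrefl c this
  -- dm z = -1 via frequently
  have hdmz : dm z = -1 := by
    refine leftDet_eq_neg_one_of_frequently f (hdm z hz_in) ?_
    rw [Filter.frequently_iff]
    intro U hU
    obtain ⟨l, hl, hsub⟩ := mem_nhdsLT_iff_exists_Ioo_subset.mp hU
    obtain ⟨v, hvT, hvz⟩ := exists_lt_of_lt_csSup hTne (show z + l < sSup T by
      rw [← hz]; have : l < 0 := hl; linarith)
    have hvle : v ≤ z := le_csSup hTbdd hvT
    have hvlt : v < z := lt_of_le_of_ne hvle (fun h => hzT (h ▸ hvT))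
    refine ⟨v - z, hsub ⟨by linarith, by linarith⟩, ?_⟩
    have : f (z + (v - z)) = f v := by ring_nf
    rw [this, hfzc]
    exact Real.sign_of_neg (by linarith [hvT.2])
  have hdpz : dp z = -1 := by rw [h0 z hz_in, hdmz]
  obtain ⟨δ₃, hδ₃, hδ₃p⟩ := rightDet_neg f (hdpz ▸ hdp z hz_in)
  -- contradiction
  have hm3 : (0:ℝ) < min δ₃ (u - z) := lt_min hδ₃ (by linarith)
  set h' : ℝ := min δ₃ (u - z) / 2 with hh'
  have h'pos : 0 < h' := by rw [hh']; linarith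
  have hfv : f (z + h') < f z := hδ₃p h' ⟨h'pos, by
    rw [hh']; have := min_le_left δ₃ (u - z); linarith⟩
  have hmem : z + h' ∈ Icc w u := ⟨by linarith, by
    rw [hh']; have := min_le_right δ₃ (u - z); linarith⟩
  have hnT : z + h' ∉ T := fun hmem' => by
    have := le_csSup hTbdd hmem'
    rw [← hz] at this
    linarith
  have : ¬ f (z + h') < c := fun hlt' => hnT ⟨hmem, hlt'⟩
  rw [hfzc] at hfv
  exact this hfv
end

lemma one_not_gt (f dp dm : ℝ → ℝ) (p q : ℝ)
    (hcont : ContinuousOn f (Icc p q))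
    (hdp : ∀ t ∈ Ioo p q, HasRightDet f t (dp t))
    (hdm : ∀ t ∈ Ioo p q, HasLeftDet f t (dm t))
    (h1 : ∀ t ∈ Ioo p q, Real.sign (dp t - dm t) = 1)
    (s t : ℝ) (hps : p ≤ s) (hst : s < t) (htq : t ≤ q) : ¬ f t < f s := by
  intro hlt
  set c : ℝ := (f s + f t) / 2 with hc
  have hc1 : f t < c := by rw [hc]; linarith
  have hc2 : c < f s := by rw [hc]; linarith
  have hIcc : Icc s t ⊆ Icc p q := Icc_subset_Icc hps htq
  have hconst : ContinuousOn f (Icc s t) := hcont.mono hIcc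
  set S : Set ℝ := {v ∈ Icc s t | f v = c} with hS
  have hSclosed : IsClosed S := by
    have : S = Icc s t ∩ f ⁻¹' {c} := by ext v; simp [hS]
    rw [this]
    exact hconst.preimage_isClosed_of_isClosed isClosed_Icc isClosed_singleton
  have hScomp : IsCompact S := isCompact_Icc.of_isClosed_subset hSclosed (sep_subset _ _)
  have hSne : S.Nonempty := by
    obtain ⟨v, hv, hfv⟩ := intermediate_value_Icc' hst.le hconst ⟨hc1.le, hc2.le⟩
    exact ⟨v, hv, hfv⟩
  set u : ℝ := sSup S with hu
  have huS : u ∈ S := hScomp.sSup_mem hSne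
  have hub : ∀ v ∈ S, v ≤ u := fun v hv => le_csSup hScomp.bddAbove hv
  have hfu : f u = c := huS.2
  have hsu : s < u := lt_of_le_of_ne huS.1.1 (fun h => by rw [← h] at hfu; linarith)
  have hut : u < t := lt_of_le_of_ne huS.1.2 (fun h => by rw [h] at hfu; linarith)
  have hu_in : u ∈ Ioo p q := ⟨lt_of_le_of_lt hps hsu, lt_of_lt_of_le hut htq⟩
  -- f < c strictly right of u
  have hgt : ∀ v ∈ Ioc u t, f v < c := by
    intro v hv
    rcases lt_trichotomy (f v) c with h | h | h
    · exact h
    · exact absurd (hub v ⟨⟨hsu.le.trans hv.1.le, hv.2⟩, h⟩) (not_le.mpr hv.1)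
    · obtain ⟨w, hw, hfw⟩ := intermediate_value_Icc' hv.2 (hconst.mono
        (Icc_subset_Icc (hsu.le.trans hv.1.le) le_rfl)) ⟨hc1.le, h.le⟩
      have hwS : w ∈ S := ⟨⟨(hsu.le.trans hv.1.le).trans hw.1, hw.2⟩, hfw⟩
      have : u < w := lt_of_lt_of_le hv.1 hw.1
      linarith [hub w hwS]
  have hdpu : dp u = -1 := by
    refine rightDet_eq f (hdp u hu_in) (sub_pos.mpr hut) (fun h' hh' => ?_)
    have : f (u + h') < c := hgt (u + h') ⟨by linarith [hh'.1], by linarith [hh'.2]⟩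
    rw [hfu, Real.sign_of_neg]; linarith
  have hge : -1 ≤ dm u :=
    ge_of_tendsto (hdm u hu_in) (Filter.Eventually.of_forall (fun h' => neg_one_le_sign _))
  have : Real.sign (dp u - dm u) ≤ 0 := sign_nonpos_of_nonpos (by rw [hdpu]; linarith)
  rw [h1 u hu_in] at this
  linarith

lemma one_lt (f dp dm : ℝ → ℝ) (p q : ℝ)
    (hcont : ContinuousOn f (Icc p q))
    (hdp : ∀ t ∈ Ioo p q, HasRightDet f t (dp t))
    (hdm : ∀ t ∈ Ioo p q, HasLeftDet f t (dm t))
    (h1 : ∀ t ∈ Ioo p q, Real.sign (dp t - dm t) = 1)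
    (s t : ℝ) (hps : p ≤ s) (hst : s < t) (htq : t ≤ q) : f s < f t := by
  rcases lt_trichotomy (f s) (f t) with h | h | h
  · exact h
  · exfalso
    by_cases hmid : ∀ v ∈ Ioo s t, f v = f s
    · set z : ℝ := (s + t) / 2 with hz
      have hzst : z ∈ Ioo s t := ⟨by rw [hz]; linarith, by rw [hz]; linarith⟩
      have hz_in : z ∈ Ioo p q :=
        ⟨lt_of_le_of_lt hps hzst.1, lt_of_lt_of_le hzst.2 htq⟩
      have hfz : f z = f s := hmid z hzst
      have hδ : (0:ℝ) < (t - s) / 2 := by linarith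
      have hdpz : dp z = 0 := by
        refine rightDet_eq f (hdp z hz_in) hδ (fun h' hh' => ?_)
        have hmem : z + h' ∈ Ioo s t := ⟨by rw [hz]; linarith [hh'.1],
          by rw [hz] at *; linarith [hh'.2]⟩
        rw [hmid _ hmem, hfz, sub_self, Real.sign_zero]
      have hdmz : dm z = 0 := by
        refine leftDet_eq f (hdm z hz_in) (neg_neg_of_pos hδ) (fun h' hh' => ?_)
        have hmem : z + h' ∈ Ioo s t := ⟨by rw [hz] at *; linarith [hh'.1],
          by rw [hz]; linarith [hh'.2]⟩
        rw [hmid _ hmem, hfz, sub_self, Real.sign_zero]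
      have := h1 z hz_in
      rw [hdpz, hdmz, sub_self, Real.sign_zero] at this
      linarith
    · push_neg at hmid
      obtain ⟨v, hv, hfv⟩ := hmid
      rcases lt_or_gt_of_ne hfv with h' | h'
      · exact one_not_gt f dp dm p q hcont hdp hdm h1 s v hps hv.1 (hv.2.le.trans htq) h'
      · rw [h] at h'
        exact one_not_gt f dp dm p q hcont hdp hdm h1 v t (hps.trans hv.1.le) hv.2 htq h'
  · exact absurd h (one_not_gt f dp dm p q hcont hdp hdm h1 s t hps hst htq)

lemma key (f dp dm : ℝ → ℝ) (p q : ℝ) (hpq : p < q)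
    (hcont : ContinuousOn f (Icc p q))
    (hdp : ∀ t ∈ Ico p q, HasRightDet f t (dp t))
    (hdm : ∀ t ∈ Ioc p q, HasLeftDet f t (dm t))
    (c : ℝ) (hc : ∀ t ∈ Ioo p q, Real.sign (dp t - dm t) = c) :
    dp p = c ∧ dm q = -c := by
  have hdp' : ∀ t ∈ Ioo p q, HasRightDet f t (dp t) :=
    fun t ht => hdp t ⟨ht.1.le, ht.2⟩
  have hdm' : ∀ t ∈ Ioo p q, HasLeftDet f t (dm t) :=
    fun t ht => hdm t ⟨ht.1, ht.2.le⟩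
  have hmid : ((p + q) / 2) ∈ Ioo p q := ⟨by linarith, by linarith⟩
  have hcval : c = -1 ∨ c = 0 ∨ c = 1 := by
    rw [← hc _ hmid]; exact Real.sign_apply_eq _
  have hppq : p ∈ Ico p q := ⟨le_rfl, hpq⟩
  have hqpq : q ∈ Ioc p q := ⟨hpq, le_rfl⟩
  rcases hcval with rfl | rfl | rfl
  · -- c = -1 : f strictly decreasing via -f
    have hmono : ∀ s t : ℝ, p ≤ s → s < t → t ≤ q → f t < f s := by
      intro s t hps hst htq
      have := one_lt (fun y => -f y) (fun y => -dp y) (fun y => -dm y) p q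
        (hcont.neg) (fun t ht => hasRightDet_neg_s15 (hdp' t ht))
        (fun t ht => hasLeftDet_neg_s15 (hdm' t ht))
        (fun t ht => by
          have : -dp t - -dm t = -(dp t - dm t) := by ring
          rw [this, real_sign_neg, hc t ht]; norm_num) s t hps hst htq
      simpa using this
    constructor
    · refine rightDet_eq f (hdp p hppq) (sub_pos.mpr hpq) (fun h' hh' => ?_)
      have : f (p + h') < f p := hmono p (p + h') le_rfl (by linarith [hh'.1])
        (by linarith [hh'.2])
      rw [Real.sign_of_neg]; linarith
    · rw [show -(-1:ℝ) = 1 by norm_num]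
      refine leftDet_eq f (hdm q hqpq) (sub_neg.mpr hpq) (fun h' hh' => ?_)
      have : f q < f (q + h') := hmono (q + h') q (by linarith [hh'.1])
        (by linarith [hh'.2]) le_rfl
      rw [Real.sign_of_pos]; linarith
  · -- c = 0 : f constant
    have h0 : ∀ t ∈ Ioo p q, dp t = dm t := by
      intro t ht
      have := hc t ht
      rw [Real.sign_eq_zero_iff] at this
      linarith
    have hconst : ∀ v ∈ Icc p q, f v = f p := by
      intro v hv
      rcases eq_or_lt_of_le hv.1 with h | h
      · rw [← h]
      · have h1 : ¬ f p < f v := zero_not_lt f dp dm p q hcont hdp' hdm' h0 p v le_rfl h hv.2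
        have h2 : ¬ f v < f p := by
          have := zero_not_lt (fun y => -f y) (fun y => -dp y) (fun y => -dm y) p q
            hcont.neg (fun t ht => hasRightDet_neg_s15 (hdp' t ht))
            (fun t ht => hasLeftDet_neg_s15 (hdm' t ht))
            (fun t ht => by show -dp t = -dm t; rw [h0 t ht]) p v le_rfl h hv.2
          simpa using this
        by_contra hne
        rcases lt_or_gt_of_ne hne with h' | h'
        · exact h2 h'
        · exact h1 h'
    constructor
    · refine rightDet_eq f (hdp p hppq) (sub_pos.mpr hpq) (fun h' hh' => ?_)
      rw [hconst (p + h') ⟨by linarith [hh'.1], by linarith [hh'.2]⟩, sub_self, Real.sign_zero]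
    · rw [show -(0:ℝ) = 0 by norm_num]
      refine leftDet_eq f (hdm q hqpq) (sub_neg.mpr hpq) (fun h' hh' => ?_)
      rw [hconst (q + h') ⟨by linarith [hh'.1], by linarith [hh'.2]⟩,
        hconst q ⟨hpq.le, le_rfl⟩, sub_self, Real.sign_zero]
  · -- c = 1 : f strictly increasing
    have hmono := one_lt f dp dm p q hcont hdp' hdm' hc
    constructor
    · refine rightDet_eq f (hdp p hppq) (sub_pos.mpr hpq) (fun h' hh' => ?_)
      have : f p < f (p + h') := hmono p (p + h') le_rfl (by linarith [hh'.1])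
        (by linarith [hh'.2])
      rw [Real.sign_of_pos]; linarith
    · rw [show -(1:ℝ) = -1 by norm_num]
      refine leftDet_eq f (hdm q hqpq) (sub_neg.mpr hpq) (fun h' hh' => ?_)
      have : f (q + h') < f q := hmono (q + h') q (by linarith [hh'.1])
        (by linarith [hh'.2]) le_rfl
      rw [Real.sign_of_neg]; linarith

/-- Semi-discrete fundamental theorem: for `f` continuous and tendable on `[a,b]`
with one-sided detachments `dp`, `dm`, tendency `τ` (extended to the endpoints by
`τ a = dp a`, `τ b = -dm b`), and a uniformly tended division
`a = x 0 < x 1 < ⋯ < x (n-1) = b` (so `τ` is constant on each open subinterval),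
`∫ a^b τ = -( Σ_{i=0}^{n-2} dp(x i)·(x i) + Σ_{i=1}^{n-1} dm(x i)·(x i) )`. -/
theorem semiDiscrete_fundamental_theorem (f dp dm τ : ℝ → ℝ) (a b : ℝ) (hab : a < b)
    (n : ℕ) (hn : 2 ≤ n) (x : ℕ → ℝ)
    (hx0 : x 0 = a) (hxn : x (n - 1) = b)
    (hmono : ∀ i j : ℕ, i < j → j < n → x i < x j)
    (hcont : ContinuousOn f (Set.Icc a b))
    (hdp : ∀ t ∈ Set.Ico a b, HasRightDet f t (dp t))
    (hdm : ∀ t ∈ Set.Ioc a b, HasLeftDet f t (dm t))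
    (hτ : ∀ t ∈ Set.Ioo a b, τ t = Real.sign (dp t - dm t))
    (hτa : τ a = dp a) (hτb : τ b = -dm b)
    (hstep : ∀ i : ℕ, i + 1 < n → ∃ c : ℝ, ∀ t ∈ Set.Ioo (x i) (x (i + 1)), τ t = c) :
    (∫ t in a..b, τ t) =
      -((∑ i ∈ Finset.range (n - 1), dp (x i) * x i) +
        ∑ i ∈ Finset.Ico 1 n, dm (x i) * x i) := by
  set N : ℕ := n - 1 with hNdef
  have hN : 1 ≤ N := by omega
  have hxn' : x N = b := hxn
  have h_lt : ∀ i, i < N → x i < x (i + 1) := fun i hi =>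
    hmono i (i + 1) (Nat.lt_succ_self i) (by omega)
  have hxa : ∀ i, i ≤ N → a ≤ x i := by
    intro i hi
    rcases Nat.eq_zero_or_pos i with h | h
    · rw [h, hx0]
    · rw [← hx0]; exact (hmono 0 i h (by omega)).le
  have hxb : ∀ i, i ≤ N → x i ≤ b := by
    intro i hi
    rcases eq_or_lt_of_le hi with h | h
    · rw [h, hxn']
    · rw [← hxn']; exact (hmono i N h (by omega)).le
  have main : ∀ i, i < N → dm (x (i + 1)) = -(dp (x i)) ∧
      ∀ t ∈ Set.Ioo (x i) (x (i + 1)), τ t = dp (x i) := by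
    intro i hi
    obtain ⟨ci, hci⟩ := hstep i (by omega)
    have hsub : Set.Ioo (x i) (x (i + 1)) ⊆ Set.Ioo a b := fun t ht =>
      ⟨lt_of_le_of_lt (hxa i (by omega)) ht.1, lt_of_lt_of_le ht.2 (hxb (i + 1) (by omega))⟩
    have hkey := key f dp dm (x i) (x (i + 1)) (h_lt i hi)
      (hcont.mono (Icc_subset_Icc (hxa i (by omega)) (hxb (i + 1) (by omega))))
      (fun t ht => hdp t ⟨le_trans (hxa i (by omega)) ht.1,
        lt_of_lt_of_le ht.2 (hxb (i + 1) (by omega))⟩)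
      (fun t ht => hdm t ⟨lt_of_le_of_lt (hxa i (by omega)) ht.1,
        le_trans ht.2 (hxb (i + 1) (by omega))⟩)
      ci (fun t ht => (hτ t (hsub ht)).symm.trans (hci t ht))
    refine ⟨by rw [hkey.2, hkey.1], fun t ht => by rw [hci t ht, hkey.1]⟩
  have hint : ∀ i, i < N → IntervalIntegrable τ MeasureTheory.volume (x i) (x (i + 1)) := by
    intro i hi
    rw [intervalIntegrable_iff_integrableOn_Ioo_of_le (h_lt i hi).le]
    exact MeasureTheory.IntegrableOn.congr_fun
      (f := fun _ => dp (x i))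
      (MeasureTheory.integrableOn_const (C := dp (x i)) measure_Ioo_lt_top.ne)
      (fun t ht => ((main i hi).2 t ht).symm) measurableSet_Ioo
  have hval : ∀ i, i < N →
      (∫ t in (x i)..(x (i + 1)), τ t) = dp (x i) * (x (i + 1) - x i) := by
    intro i hi
    have hae : ∀ᵐ t ∂(MeasureTheory.volume), t ∈ Set.uIoc (x i) (x (i + 1)) → τ t = dp (x i) := by
      rw [MeasureTheory.ae_iff]
      refine MeasureTheory.measure_mono_null (fun t ht => ?_) (MeasureTheory.measure_singleton (x (i + 1)))
      simp only [Set.mem_setOf_eq, _root_.not_imp] at ht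
      obtain ⟨htI, hne⟩ := ht
      rw [uIoc_of_le (h_lt i hi).le] at htI
      rcases eq_or_lt_of_le htI.2 with h | h
      · exact h
      · exact absurd ((main i hi).2 t ⟨htI.1, h⟩) hne
    rw [intervalIntegral.integral_congr_ae hae, intervalIntegral.integral_const,
      smul_eq_mul]
    ring
  have hsplit : (∫ t in a..b, τ t) =
      ∑ i ∈ Finset.range N, ∫ t in (x i)..(x (i + 1)), τ t := by
    rw [intervalIntegral.sum_integral_adjacent_intervals hint, hx0, hxn']
  rw [hsplit, Finset.sum_Ico_eq_sum_range]
  have hNn : n - 1 = N := rfl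
  rw [hNn, ← Finset.sum_add_distrib, ← Finset.sum_neg_distrib]
  refine Finset.sum_congr rfl (fun i hi => ?_)
  have hi' := Finset.mem_range.mp hi
  rw [hval i hi', show 1 + i = i + 1 from Nat.add_comm 1 i, (main i hi').1]
  ring
end
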